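/- Let Z be a uniformly discrete space of bounded geometry. If a uniformly bounded integer-valued 0-cycle c bounds a uniformly finite 1-chain with real coefficients, then c bounds a uniformly finite 1-chain with integer coefficients; i.e., the map H₀^{uf}(Z; ℤ) → H₀^{uf}(Z; ℝ) is injective. -/

import Mathlib

/-- The closed `r`-neighborhood of a set `A`. -/
def nbhd {Z : Type*} [MetricSpace Z] (r : ℝ) (A : Set Z) : Set Z :=
  {z | ∃ a ∈ A, dist z a ≤ r}

/-- The `r`-boundary of `A`: points outside `A` within distance `r` of `A`. -/
def bdry {Z : Type*} [MetricSpace Z] (r : ℝ) (A : Set Z) : Set Z :=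
  nbhd r A \ A

/-- Uniformly discrete metric space. -/
def UniformlyDiscrete (Z : Type*) [MetricSpace Z] : Prop :=
  ∃ r > (0 : ℝ), ∀ x y : Z, dist x y < r → x = y

/-- Bounded geometry: balls of radius `r` have at most `N_r` points. -/
def BoundedGeometry (Z : Type*) [MetricSpace Z] : Prop :=
  ∀ r : ℝ, ∃ N : ℕ, ∀ x : Z, {y : Z | dist y x ≤ r}.Finite ∧
    {y : Z | dist y x ≤ r}.ncard ≤ N

/-- A uniformly finite 1-chain with coefficients in a normed ring `R`:
coefficients on ordered pairs (edges), uniformly bounded, supported on edges of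
uniformly bounded length, and locally finite at each vertex. -/
def IsUFOneChain {Z : Type*} [MetricSpace Z] {R : Type*} [NormedRing R]
    (b : Z → Z → R) : Prop :=
  (∃ M : ℝ, ∀ z w : Z, ‖b z w‖ ≤ M) ∧
  (∃ l : ℝ, ∀ z w : Z, b z w ≠ 0 → dist z w ≤ l) ∧
  (∀ z : Z, {w : Z | b z w ≠ 0 ∨ b w z ≠ 0}.Finite)

/-- The boundary of a 1-chain at a vertex `z`: net flow into `z`. -/
noncomputable def ufBoundaryAt {Z : Type*} [MetricSpace Z] {R : Type*} [NormedRing R]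
    (b : Z → Z → R) (z : Z) : R :=
  (∑ᶠ w : Z, b w z) - ∑ᶠ w : Z, b z w

/-- A 0-chain `c` represents `0` in `H₀^{uf}(Z; R)` iff it is the boundary of a
uniformly finite 1-chain. -/
def UFBoundsZero {Z : Type*} [MetricSpace Z] {R : Type*} [NormedRing R]
    (c : Z → R) : Prop :=
  ∃ b : Z → Z → R, IsUFOneChain b ∧ ∀ z : Z, c z = ufBoundaryAt b z


namespace BW12
open Matrix
open Finset

variable {Z : Type*} [DecidableEq Z]

/-- A real number is an integer. -/
def IsIntR (r : ℝ) : Prop := ∃ k : ℤ, r = (k : ℝ)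

lemma IsIntR.zero : IsIntR 0 := ⟨0, by simp⟩

lemma IsIntR.add {a b : ℝ} (ha : IsIntR a) (hb : IsIntR b) : IsIntR (a + b) := by
  obtain ⟨k, rfl⟩ := ha; obtain ⟨l, rfl⟩ := hb; exact ⟨k + l, by push_cast; ring⟩

lemma IsIntR.sub {a b : ℝ} (ha : IsIntR a) (hb : IsIntR b) : IsIntR (a - b) := by
  obtain ⟨k, rfl⟩ := ha; obtain ⟨l, rfl⟩ := hb; exact ⟨k - l, by push_cast; ring⟩

lemma IsIntR.sum {ι : Type*} {s : Finset ι} {f : ι → ℝ} (h : ∀ i ∈ s, IsIntR (f i)) :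
    IsIntR (∑ i ∈ s, f i) := by
  classical
  induction s using Finset.induction_on with
  | empty => simpa using IsIntR.zero
  | insert _ _ hni ih =>
    rw [Finset.sum_insert hni]
    exact (h _ (Finset.mem_insert_self _ _)).add
      (ih fun i hi => h i (Finset.mem_insert_of_mem hi))

/-- Divergence of an edge-function at `z`, relative to a finite edge set. -/
def fdiv {M : Type*} [AddCommGroup M] (E : Finset (Z × Z)) (x : Z × Z → M) (z : Z) : M :=
  (∑ e ∈ E, if e.2 = z then x e else 0) - ∑ e ∈ E, if e.1 = z then x e else 0

lemma fdiv_cast (E : Finset (Z × Z)) (y : Z × Z → ℤ) (z : Z) :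
    ((fdiv E y z : ℤ) : ℝ) = fdiv E (fun e => (y e : ℝ)) z := by
  simp only [fdiv, Int.cast_sub, Int.cast_sum, apply_ite (fun k : ℤ => (k : ℝ)), Int.cast_zero]

lemma fdiv_subset {M : Type*} [AddCommGroup M] {E F : Finset (Z × Z)} (hFE : F ⊆ E)
    (x : Z × Z → M) (hx : ∀ e, x e ≠ 0 → e ∈ F) (z : Z) :
    fdiv E x z = fdiv F x z := by
  classical
  unfold fdiv
  rw [Finset.sum_subset hFE, Finset.sum_subset hFE] <;>
  · intro e _ he
    have : x e = 0 := by by_contra h; exact he (hx e h)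
    simp [this]

lemma fdiv_add_mul (E : Finset (Z × Z)) (x d : Z × Z → ℝ) (t : ℝ) (z : Z) :
    fdiv E (fun e => x e + t * d e) z = fdiv E x z + t * fdiv E d z := by
  classical
  have key : ∀ π : Z × Z → Z,
      (∑ e ∈ E, if π e = z then x e + t * d e else 0) =
      (∑ e ∈ E, if π e = z then x e else 0) + t * ∑ e ∈ E, if π e = z then d e else 0 := by
    intro π
    rw [Finset.mul_sum, ← Finset.sum_add_distrib]
    refine Finset.sum_congr rfl fun e _ => ?_
    by_cases h : π e = z <;> simp [h]
  unfold fdiv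
  rw [key Prod.fst, key Prod.snd]; ring

/-- Convert the edge-set divergence to a sum over neighbours. -/
lemma fdiv_eq_sumT {M : Type*} [AddCommGroup M] (E : Finset (Z × Z)) (x : Z × Z → M)
    (T : Finset Z) (z : Z) (hzT : z ∉ T)
    (hfwd : ∀ e ∈ E, x e ≠ 0 → e.1 ≠ e.2 → (e.2 = z → e.1 ∈ T) ∧ (e.1 = z → e.2 ∈ T))
    (hbwd : ∀ w ∈ T, (x (w, z) ≠ 0 → (w, z) ∈ E) ∧ (x (z, w) ≠ 0 → (z, w) ∈ E)) :
    fdiv E x z = ∑ w ∈ T, (x (w, z) - x (z, w)) := by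
  classical
  have hwz : ∀ w ∈ T, w ≠ z := fun w hw => fun h => hzT (h ▸ hw)
  unfold fdiv
  rw [← Finset.sum_filter (fun e : Z × Z => e.2 = z) x,
      ← Finset.sum_filter (fun e : Z × Z => e.1 = z) x]
  rw [← Finset.sum_filter_add_sum_filter_not (E.filter (fun e : Z × Z => e.2 = z))
        (fun e : Z × Z => e.1 = z) x,
      ← Finset.sum_filter_add_sum_filter_not (E.filter (fun e : Z × Z => e.1 = z))
        (fun e : Z × Z => e.2 = z) x]
  have hloopeq : (E.filter (fun e : Z × Z => e.2 = z)).filter (fun e : Z × Z => e.1 = z)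
      = (E.filter (fun e : Z × Z => e.1 = z)).filter (fun e : Z × Z => e.2 = z) := by
    rw [Finset.filter_filter, Finset.filter_filter]
    exact Finset.filter_congr (fun e _ => by tauto)
  rw [hloopeq]
  have h1 : ∑ e ∈ (E.filter (fun e : Z × Z => e.2 = z)).filter (fun e : Z × Z => ¬ e.1 = z), x e
      = ∑ w ∈ T, x (w, z) := by
    rw [← Finset.sum_filter_ne_zero (f := x), ← Finset.sum_filter_ne_zero (f := fun w => x (w, z))]
    refine Finset.sum_bij' (fun e _ => e.1) (fun w _ => (w, z)) ?_ ?_ ?_ ?_ ?_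
    · intro e he
      simp only [Finset.mem_filter] at he ⊢
      obtain ⟨⟨⟨heE, he2⟩, he1⟩, hne⟩ := he
      have hep : e = (e.1, z) := by rw [← he2]
      refine ⟨(hfwd e heE hne (fun h => he1 (h.trans he2))).1 he2, ?_⟩
      rwa [← hep]
    · intro w hw
      have hw' := Finset.mem_filter.mp hw
      exact Finset.mem_filter.mpr ⟨Finset.mem_filter.mpr ⟨Finset.mem_filter.mpr
        ⟨(hbwd w hw'.1).1 hw'.2, rfl⟩, hwz w hw'.1⟩, hw'.2⟩
    · intro e he
      simp only [Finset.mem_filter] at he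
      obtain ⟨⟨⟨_, h2⟩, _⟩, _⟩ := he
      obtain ⟨a, b⟩ := e
      simp_all
    · intro w _; rfl
    · intro e he
      simp only [Finset.mem_filter] at he
      obtain ⟨⟨⟨_, h2⟩, _⟩, _⟩ := he
      obtain ⟨a, b⟩ := e
      simp_all
  have h2 : ∑ e ∈ (E.filter (fun e : Z × Z => e.1 = z)).filter (fun e : Z × Z => ¬ e.2 = z), x e
      = ∑ w ∈ T, x (z, w) := by
    rw [← Finset.sum_filter_ne_zero (f := x), ← Finset.sum_filter_ne_zero (f := fun w => x (z, w))]
    refine Finset.sum_bij' (fun e _ => e.2) (fun w _ => (z, w)) ?_ ?_ ?_ ?_ ?_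
    · intro e he
      simp only [Finset.mem_filter] at he ⊢
      obtain ⟨⟨⟨heE, he1⟩, he2⟩, hne⟩ := he
      have hep : e = (z, e.2) := by rw [← he1]
      refine ⟨(hfwd e heE hne (fun h => he2 (h ▸ he1))).2 he1, ?_⟩
      rwa [← hep]
    · intro w hw
      have hw' := Finset.mem_filter.mp hw
      exact Finset.mem_filter.mpr ⟨Finset.mem_filter.mpr ⟨Finset.mem_filter.mpr
        ⟨(hbwd w hw'.1).2 hw'.2, rfl⟩, fun h => hwz w hw'.1 h⟩, hw'.2⟩
    · intro e he
      simp only [Finset.mem_filter] at he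
      obtain ⟨⟨⟨_, h1⟩, _⟩, _⟩ := he
      obtain ⟨a, b⟩ := e
      simp_all
    · intro w _; rfl
    · intro e he
      simp only [Finset.mem_filter] at he
      obtain ⟨⟨⟨_, h1⟩, _⟩, _⟩ := he
      obtain ⟨a, b⟩ := e
      simp_all
  rw [h1, h2, Finset.sum_sub_distrib]
  abel

/-- `ufBoundaryAt` as a finite sum over a large enough finite neighbour set. -/
lemma ufBoundaryAt_eq_sum {Z : Type*} [MetricSpace Z] {R : Type*} [NormedRing R]
    (b : Z → Z → R) (z : Z) (T : Finset Z) (hz : z ∉ T)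
    (hT : ∀ w, w ≠ z → (b z w ≠ 0 ∨ b w z ≠ 0) → w ∈ T) :
    ufBoundaryAt b z = ∑ w ∈ T, (b w z - b z w) := by
  classical
  have hs1 : Function.support (fun w => b w z) ⊆ (insert z T : Finset Z) := by
    intro w hw
    simp only [Function.mem_support] at hw
    simp only [Finset.coe_insert, Set.mem_insert_iff, Finset.mem_coe]
    by_cases h : w = z
    · exact Or.inl h
    · exact Or.inr (hT w h (Or.inr hw))
  have hs2 : Function.support (fun w => b z w) ⊆ (insert z T : Finset Z) := by
    intro w hw
    simp only [Function.mem_support] at hw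
    simp only [Finset.coe_insert, Set.mem_insert_iff, Finset.mem_coe]
    by_cases h : w = z
    · exact Or.inl h
    · exact Or.inr (hT w h (Or.inl hw))
  rw [ufBoundaryAt, finsum_eq_sum_of_support_subset _ hs1,
    finsum_eq_sum_of_support_subset _ hs2,
    Finset.sum_insert hz, Finset.sum_insert hz, Finset.sum_sub_distrib]
  abel

lemma exists_circulation (F : Finset (Z × Z)) (hFne : F.Nonempty) (S'' : Finset Z)
    (hdeg : ∀ z ∈ S'', 2 ≤ (F.filter (fun e => e.1 = z ∨ e.2 = z)).card) :
    ∃ d : Z × Z → ℝ, (∃ e ∈ F, d e ≠ 0) ∧ (∀ e, d e ≠ 0 → e ∈ F) ∧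
      ∀ z ∈ S'', fdiv F d z = 0 := by
  classical
  set α := Option {z // z ∈ S''} with hα
  set β := {e // e ∈ F} with hβ
  set A : Matrix α β ℝ := fun a e =>
    match a with
    | none => (if (e : Z × Z).2 ∈ S'' then (0:ℝ) else 1) - (if (e : Z × Z).1 ∈ S'' then 0 else 1)
    | some z => (if (e : Z × Z).2 = (z : Z) then (1:ℝ) else 0) -
        (if (e : Z × Z).1 = (z : Z) then 1 else 0) with hA
  have hAs : ∀ (z : {z // z ∈ S''}) (e : β), A (some z) e =
      (if (e : Z × Z).2 = (z : Z) then (1:ℝ) else 0) -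
      (if (e : Z × Z).1 = (z : Z) then 1 else 0) := fun _ _ => rfl
  have hAn : ∀ e : β, A none e =
      (if (e : Z × Z).2 ∈ S'' then (0:ℝ) else 1) - (if (e : Z × Z).1 ∈ S'' then 0 else 1) :=
    fun _ => rfl
  -- column sums vanish
  have colsum : ∀ e : β, ∑ a : α, A a e = 0 := by
    intro e
    rw [Fintype.sum_option]
    have h2 : ∑ z : {z // z ∈ S''}, (if (e : Z × Z).2 = (z : Z) then (1:ℝ) else 0)
        = (if (e : Z × Z).2 ∈ S'' then 1 else 0) := by
      rw [← Finset.sum_subtype S'' (fun z => Iff.rfl)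
        (fun w => if (e : Z × Z).2 = w then (1:ℝ) else 0)]
      exact Finset.sum_ite_eq S'' _ _
    have h1 : ∑ z : {z // z ∈ S''}, (if (e : Z × Z).1 = (z : Z) then (1:ℝ) else 0)
        = (if (e : Z × Z).1 ∈ S'' then 1 else 0) := by
      rw [← Finset.sum_subtype S'' (fun z => Iff.rfl)
        (fun w => if (e : Z × Z).1 = w then (1:ℝ) else 0)]
      exact Finset.sum_ite_eq S'' _ _
    simp only [hAs, hAn, Finset.sum_sub_distrib, h1, h2]
    by_cases hc1 : (e : Z × Z).2 ∈ S'' <;> by_cases hc2 : (e : Z × Z).1 ∈ S'' <;>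
      simp [hc1, hc2]
  set W := LinearMap.ker (Matrix.mulVecLin Aᵀ) with hW
  -- the all-ones vector is in the kernel of the transpose
  have hy1 : (fun _ => (1:ℝ) : α → ℝ) ∈ W := by
    rw [hW, LinearMap.mem_ker]
    funext e
    show ∑ a : α, Aᵀ e a * 1 = 0
    simp only [Matrix.transpose_apply, mul_one]
    exact colsum e
  have hy1ne : (fun _ => (1:ℝ) : α → ℝ) ≠ 0 := by
    intro h
    have := congrFun h none
    simp at this
  -- double counting
  have hdouble : ∑ z ∈ S'', (F.filter (fun e => e.1 = z ∨ e.2 = z)).card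
      = ∑ e ∈ F, (S''.filter (fun z => e.1 = z ∨ e.2 = z)).card := by
    simp only [Finset.card_filter]
    rw [Finset.sum_comm]
  have hlow : 2 * S''.card ≤ ∑ z ∈ S'', (F.filter (fun e => e.1 = z ∨ e.2 = z)).card := by
    have := Finset.card_nsmul_le_sum S''
      (fun z => (F.filter (fun e => e.1 = z ∨ e.2 = z)).card) 2 hdeg
    simpa [mul_comm] using this
  have hup2 : ∀ e ∈ F, (S''.filter (fun z => (e : Z × Z).1 = z ∨ (e : Z × Z).2 = z)).card ≤ 2 := by
    intro e _
    have hsub : S''.filter (fun z => e.1 = z ∨ e.2 = z) ⊆ {e.1, e.2} := by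
      intro z hz
      rw [Finset.mem_filter] at hz
      rcases hz.2 with h | h
      · exact Finset.mem_insert.mpr (Or.inl h.symm)
      · exact Finset.mem_insert.mpr (Or.inr (Finset.mem_singleton.mpr h.symm))
    calc (S''.filter (fun z => e.1 = z ∨ e.2 = z)).card ≤ ({e.1, e.2} : Finset Z).card :=
          Finset.card_le_card hsub
      _ ≤ 2 := by
          refine le_trans (Finset.card_insert_le _ _) ?_
          simp
  -- kernel of A is nontrivial
  have hker : LinearMap.ker (Matrix.mulVecLin A) ≠ ⊥ := by
    intro hbot
    have hrankA : A.rank = Fintype.card β := by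
      have h := LinearMap.finrank_range_add_finrank_ker (Matrix.mulVecLin A)
      rw [hbot, finrank_bot, add_zero, Module.finrank_fintype_fun_eq_card] at h
      exact h
    have hrn := LinearMap.finrank_range_add_finrank_ker (Matrix.mulVecLin Aᵀ)
    rw [Module.finrank_fintype_fun_eq_card] at hrn
    have hrT : Aᵀ.rank = A.rank := Matrix.rank_transpose A
    have hcardα : Fintype.card α = S''.card + 1 := by
      show Fintype.card (Option {z // z ∈ S''}) = _
      rw [Fintype.card_option, Fintype.card_coe]
    have hcardβ : Fintype.card β = F.card := Fintype.card_coe F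
    by_cases hall : ∀ e ∈ F, e.1 ∈ S'' ∧ e.2 ∈ S''
    · -- second kernel vector: indicator of `none`
      have hy2 : (fun a => match a with | none => (1:ℝ) | some _ => 0 : α → ℝ) ∈ W := by
        rw [hW, LinearMap.mem_ker]
        funext e
        show ∑ a : α, Aᵀ e a * _ = 0
        rw [Fintype.sum_option]
        simp only [Matrix.transpose_apply]
        have := hall (e : Z × Z) e.2
        simp [hAn, this.1, this.2]
      have hS''ne : S''.Nonempty := by
        obtain ⟨e, he⟩ := hFne
        exact ⟨e.1, (hall e he).1⟩
      obtain ⟨z0, hz0⟩ := hS''ne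
      -- linear independence of the two kernel vectors
      have hli : LinearIndependent ℝ
          (![(⟨_, hy1⟩ : W), (⟨_, hy2⟩ : W)] : Fin 2 → W) := by
        apply LinearIndependent.of_comp W.subtype
        have hcomp : (W.subtype ∘ ![(⟨_, hy1⟩ : W), (⟨_, hy2⟩ : W)]) =
            ![(fun _ => (1:ℝ) : α → ℝ), (fun a => match a with | none => (1:ℝ) | some _ => 0)] := by
          funext i
          fin_cases i <;> rfl
        rw [hcomp]
        rw [LinearIndependent.pair_iff]
        intro s t hst
        have h1 := congrFun hst (some ⟨z0, hz0⟩)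
        have h2 := congrFun hst none
        simp at h1 h2
        constructor
        · exact h1
        · rw [h1] at h2; simpa using h2
      have h2le : 2 ≤ Module.finrank ℝ W := by
        have := hli.fintype_card_le_finrank
        simpa using this
      have hcount : S''.card ≤ F.card := by
        have h1 : ∑ e ∈ F, (S''.filter (fun z => e.1 = z ∨ e.2 = z)).card ≤ 2 * F.card := by
          calc ∑ e ∈ F, (S''.filter (fun z => e.1 = z ∨ e.2 = z)).card
              ≤ ∑ _e ∈ F, 2 := Finset.sum_le_sum hup2
            _ = 2 * F.card := by rw [Finset.sum_const, smul_eq_mul, mul_comm]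
        have := hlow.trans (hdouble.le.trans h1)
        omega
      have hrn' : Aᵀ.rank + Module.finrank ℝ W = Fintype.card α := hrn
      rw [hrT, hrankA, hcardβ, hcardα] at hrn'
      omega
    · push_neg at hall
      obtain ⟨estar, hestar, hout⟩ := hall
      have hup1 : (S''.filter (fun z => estar.1 = z ∨ estar.2 = z)).card ≤ 1 := by
        by_cases hcase : estar.1 ∈ S''
        · have h2 : estar.2 ∉ S'' := hout hcase
          have hsub : S''.filter (fun z => estar.1 = z ∨ estar.2 = z) ⊆ {estar.1} := by
            intro z hz
            rw [Finset.mem_filter] at hz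
            rcases hz.2 with h | h
            · exact Finset.mem_singleton.mpr h.symm
            · exact absurd (h ▸ hz.1) h2
          exact le_trans (Finset.card_le_card hsub) (by simp)
        · have hsub : S''.filter (fun z => estar.1 = z ∨ estar.2 = z) ⊆ {estar.2} := by
            intro z hz
            rw [Finset.mem_filter] at hz
            rcases hz.2 with h | h
            · exact absurd (h ▸ hz.1) hcase
            · exact Finset.mem_singleton.mpr h.symm
          exact le_trans (Finset.card_le_card hsub) (by simp)
      have hFpos : 1 ≤ F.card := Finset.card_pos.mpr hFne
      have hsum : ∑ e ∈ F, (S''.filter (fun z => e.1 = z ∨ e.2 = z)).card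
          ≤ 1 + 2 * (F.card - 1) := by
        rw [← Finset.add_sum_erase F _ hestar]
        have hrest : ∑ e ∈ F.erase estar, (S''.filter (fun z => e.1 = z ∨ e.2 = z)).card
            ≤ 2 * (F.card - 1) := by
          calc ∑ e ∈ F.erase estar, (S''.filter (fun z => e.1 = z ∨ e.2 = z)).card
              ≤ ∑ _e ∈ F.erase estar, 2 :=
                Finset.sum_le_sum (fun e he => hup2 e (Finset.mem_of_mem_erase he))
            _ = 2 * (F.card - 1) := by
                rw [Finset.sum_const, smul_eq_mul, Finset.card_erase_of_mem hestar, mul_comm]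
        exact Nat.add_le_add hup1 hrest
      have hcount : S''.card + 1 ≤ F.card := by
        have := hlow.trans (hdouble.le.trans hsum)
        omega
      have h1le : 1 ≤ Module.finrank ℝ W := by
        have hli : LinearIndependent ℝ (![(⟨_, hy1⟩ : W)] : Fin 1 → W) := by
          apply LinearIndependent.of_comp W.subtype
          have hcomp : (W.subtype ∘ ![(⟨_, hy1⟩ : W)]) = ![(fun _ => (1:ℝ) : α → ℝ)] := by
            funext i; fin_cases i <;> rfl
          rw [hcomp]
          refine linearIndependent_unique_iff.mpr ?_
          simpa using hy1ne
        have := hli.fintype_card_le_finrank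
        simpa using this
      have hrn' : Aᵀ.rank + Module.finrank ℝ W = Fintype.card α := hrn
      rw [hrT, hrankA, hcardβ, hcardα] at hrn'
      omega
  -- extract the circulation
  obtain ⟨d₀, hd₀mem, hd₀ne⟩ := (Submodule.ne_bot_iff _).mp hker
  have hAd : Matrix.mulVec A d₀ = 0 := LinearMap.mem_ker.mp hd₀mem
  refine ⟨fun e => if h : e ∈ F then d₀ ⟨e, h⟩ else 0, ?_, ?_, ?_⟩
  · obtain ⟨b, hb⟩ := Function.ne_iff.mp hd₀ne
    exact ⟨b, b.2, by simpa [dif_pos b.2] using hb⟩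
  · intro e he
    by_contra hnot
    exact he (dif_neg hnot)
  · intro z hz
    have key : fdiv F (fun e => if h : e ∈ F then d₀ ⟨e, h⟩ else 0) z
        = ∑ b : β, A (some ⟨z, hz⟩) b * d₀ b := by
      rw [fdiv, ← Finset.sum_sub_distrib,
        Finset.sum_subtype F (fun _ => Iff.rfl)
          (fun e => (if e.2 = z then (if h : e ∈ F then d₀ ⟨e, h⟩ else 0) else 0)
            - (if e.1 = z then (if h : e ∈ F then d₀ ⟨e, h⟩ else 0) else 0))]
      refine Finset.sum_congr rfl fun b _ => ?_
      rw [hAs]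
      by_cases h2 : (b : Z × Z).2 = z <;> by_cases h1 : (b : Z × Z).1 = z <;>
        simp [h1, h2, dif_pos b.2]
    rw [key]
    have hthis := congrFun hAd (some ⟨z, hz⟩)
    simpa [Matrix.mulVec, dotProduct] using hthis

lemma round_of_int {E : Finset (Z × Z)} {S : Finset Z} {c : Z → ℤ} {M' : ℤ} {x : Z × Z → ℝ}
    (hsupp : ∀ e, x e ≠ 0 → e ∈ E) (hbd : ∀ e, |x e| ≤ (M' : ℝ))
    (hdiv : ∀ z ∈ S, fdiv E x z = (c z : ℝ))
    (hall : ∀ e ∈ E, IsIntR (x e)) :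
    ∃ y : Z × Z → ℤ, (∀ e, y e ≠ 0 → e ∈ E) ∧ (∀ e, |y e| ≤ M') ∧
      (∀ z ∈ S, fdiv E (fun e => ((y e : ℤ) : ℝ)) z = (c z : ℝ)) := by
  classical
  have key : ∀ e, ((⌊x e⌋ : ℤ) : ℝ) = x e := by
    intro e
    by_cases he : e ∈ E
    · obtain ⟨k, hk⟩ := hall e he
      rw [hk, Int.floor_intCast]
    · have h0 : x e = 0 := by by_contra h; exact he (hsupp e h)
      rw [h0]; simp
  refine ⟨fun e => ⌊x e⌋, ?_, ?_, ?_⟩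
  · intro e he
    apply hsupp
    intro h0
    apply he
    have hkey : ((⌊x e⌋ : ℤ) : ℝ) = 0 := by rw [key e, h0]
    show (⌊x e⌋ : ℤ) = 0
    exact_mod_cast hkey
  · intro e
    have h := hbd e
    rw [← key e] at h
    exact_mod_cast h
  · intro z hz
    have hfe : (fun e => ((⌊x e⌋ : ℤ) : ℝ)) = x := funext key
    rw [hfe]
    exact hdiv z hz

open Classical in
lemma round_flow (n : ℕ) {E : Finset (Z × Z)} (hloop : ∀ e ∈ E, e.1 ≠ e.2)
    {S : Finset Z} {c : Z → ℤ} {M' : ℤ} :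
    ∀ x : Z × Z → ℝ, (E.filter (fun e => ¬ IsIntR (x e))).card ≤ n →
    (∀ e, x e ≠ 0 → e ∈ E) → (∀ e, |x e| ≤ (M' : ℝ)) →
    (∀ z ∈ S, fdiv E x z = (c z : ℝ)) →
    ∃ y : Z × Z → ℤ, (∀ e, y e ≠ 0 → e ∈ E) ∧ (∀ e, |y e| ≤ M') ∧
      (∀ z ∈ S, fdiv E (fun e => ((y e : ℤ) : ℝ)) z = (c z : ℝ)) := by
  classical
  induction n with
  | zero =>
    intro x hcard hsupp hbd hdiv
    apply round_of_int hsupp hbd hdiv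
    intro e he
    by_contra h
    have hmem : e ∈ E.filter (fun e => ¬ IsIntR (x e)) := Finset.mem_filter.mpr ⟨he, h⟩
    have := Finset.card_pos.mpr ⟨e, hmem⟩
    omega
  | succ n ih =>
    intro x hcard hsupp hbd hdiv
    set F := E.filter (fun e => ¬ IsIntR (x e)) with hF
    by_cases hFe : F = ∅
    · apply round_of_int hsupp hbd hdiv
      intro e he
      by_contra h
      have hmem : e ∈ F := Finset.mem_filter.mpr ⟨he, h⟩
      simp [hFe] at hmem
    have hFne : F.Nonempty := Finset.nonempty_iff_ne_empty.mpr hFe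
    have hFsub : F ⊆ E := Finset.filter_subset _ _
    have hFfrac : ∀ e ∈ F, ¬ IsIntR (x e) := fun e he => (Finset.mem_filter.mp he).2
    set S'' := S.filter (fun z => ∃ e ∈ F, e.1 = z ∨ e.2 = z) with hS''
    -- every vertex of S'' meets at least two fractional edges
    have hdeg : ∀ z ∈ S'', 2 ≤ (F.filter (fun e => e.1 = z ∨ e.2 = z)).card := by
      intro z hzS''
      rw [hS'', Finset.mem_filter] at hzS''
      obtain ⟨hzS, e1, he1F, he1inc⟩ := hzS''
      by_contra hlt
      push_neg at hlt
      have hIne : e1 ∈ F.filter (fun e => e.1 = z ∨ e.2 = z) :=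
        Finset.mem_filter.mpr ⟨he1F, he1inc⟩
      have hcard1 : (F.filter (fun e => e.1 = z ∨ e.2 = z)).card = 1 := by
        have := Finset.card_pos.mpr ⟨e1, hIne⟩
        omega
      obtain ⟨e0, he0⟩ := Finset.card_eq_one.mp hcard1
      have he0I : e0 ∈ F.filter (fun e => e.1 = z ∨ e.2 = z) := by
        rw [he0]; exact Finset.mem_singleton_self e0
      have he0F : e0 ∈ F := (Finset.mem_filter.mp he0I).1
      have he0frac : ¬ IsIntR (x e0) := hFfrac e0 he0F
      have he0inc : e0.1 = z ∨ e0.2 = z := (Finset.mem_filter.mp he0I).2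
      have he0loop : e0.1 ≠ e0.2 := hloop e0 (hFsub he0F)
      have hdz := hdiv z hzS
      rw [fdiv] at hdz
      have hsplit : ∀ π : Z × Z → Z,
          (∑ e ∈ E, if π e = z then x e else 0)
          = (∑ e ∈ F.filter (fun e => π e = z), x e)
            + ∑ e ∈ (E.filter (fun e => π e = z)).filter (fun e => ¬¬ IsIntR (x e)), x e := by
        intro π
        rw [← Finset.sum_filter (fun e => π e = z) x,
          ← Finset.sum_filter_add_sum_filter_not (E.filter (fun e => π e = z))
            (fun e => ¬ IsIntR (x e)) x]
        congr 2
        rw [hF, Finset.filter_filter, Finset.filter_filter]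
        exact Finset.filter_congr fun e _ => by tauto
      have hJ2 : IsIntR (∑ e ∈ (E.filter (fun e => e.2 = z)).filter
          (fun e => ¬¬ IsIntR (x e)), x e) :=
        IsIntR.sum fun e he => not_not.mp (Finset.mem_filter.mp he).2
      have hJ1 : IsIntR (∑ e ∈ (E.filter (fun e => e.1 = z)).filter
          (fun e => ¬¬ IsIntR (x e)), x e) :=
        IsIntR.sum fun e he => not_not.mp (Finset.mem_filter.mp he).2
      have hsub2 : F.filter (fun e => e.2 = z) ⊆ {e0} := by
        intro e he
        rw [← he0]
        obtain ⟨heF, he2⟩ := Finset.mem_filter.mp he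
        exact Finset.mem_filter.mpr ⟨heF, Or.inr he2⟩
      have hsub1 : F.filter (fun e => e.1 = z) ⊆ {e0} := by
        intro e he
        rw [← he0]
        obtain ⟨heF, he1⟩ := Finset.mem_filter.mp he
        exact Finset.mem_filter.mpr ⟨heF, Or.inl he1⟩
      rw [hsplit Prod.snd, hsplit Prod.fst] at hdz
      rcases he0inc with h01 | h02
      · have hempty : F.filter (fun e => e.2 = z) = ∅ := by
          rw [Finset.eq_empty_iff_forall_notMem]
          intro e he
          have he' : e = e0 := Finset.mem_singleton.mp (hsub2 he)
          have he2 : e.2 = z := (Finset.mem_filter.mp he).2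
          exact he0loop (by rw [h01, ← he', he2])
        have hsingle : F.filter (fun e => e.1 = z) = {e0} :=
          Finset.Subset.antisymm hsub1
            (Finset.singleton_subset_iff.mpr (Finset.mem_filter.mpr ⟨he0F, h01⟩))
        rw [hempty, hsingle, Finset.sum_empty, Finset.sum_singleton] at hdz
        apply he0frac
        have hx0 : x e0 = (∑ e ∈ (E.filter (fun e => e.2 = z)).filter
              (fun e => ¬¬ IsIntR (x e)), x e)
            - (∑ e ∈ (E.filter (fun e => e.1 = z)).filter
              (fun e => ¬¬ IsIntR (x e)), x e) - (c z : ℝ) := by linarith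
        rw [hx0]
        exact (hJ2.sub hJ1).sub ⟨c z, rfl⟩
      · have hempty : F.filter (fun e => e.1 = z) = ∅ := by
          rw [Finset.eq_empty_iff_forall_notMem]
          intro e he
          have he' : e = e0 := Finset.mem_singleton.mp (hsub1 he)
          have he1 : e.1 = z := (Finset.mem_filter.mp he).2
          exact he0loop (by rw [h02, ← he', he1])
        have hsingle : F.filter (fun e => e.2 = z) = {e0} :=
          Finset.Subset.antisymm hsub2
            (Finset.singleton_subset_iff.mpr (Finset.mem_filter.mpr ⟨he0F, h02⟩))
        rw [hempty, hsingle, Finset.sum_empty, Finset.sum_singleton] at hdz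
        apply he0frac
        have hx0 : x e0 = (c z : ℝ)
            + (∑ e ∈ (E.filter (fun e => e.1 = z)).filter
              (fun e => ¬¬ IsIntR (x e)), x e)
            - (∑ e ∈ (E.filter (fun e => e.2 = z)).filter
              (fun e => ¬¬ IsIntR (x e)), x e) := by linarith
        rw [hx0]
        exact (IsIntR.add ⟨c z, rfl⟩ hJ1).sub hJ2
    -- get a fractional circulation
    obtain ⟨d, ⟨ed, hedF, hedne⟩, hdsupp, hdcirc⟩ := exists_circulation F hFne S'' hdeg
    have hdivd : ∀ z ∈ S, fdiv E d z = 0 := by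
      intro z hzS
      rw [fdiv_subset hFsub d hdsupp z]
      by_cases hz'' : z ∈ S''
      · exact hdcirc z hz''
      · have hninc : ∀ e ∈ F, ¬ (e.1 = z ∨ e.2 = z) := by
          intro e he hinc
          exact hz'' (Finset.mem_filter.mpr ⟨hzS, e, he, hinc⟩)
        rw [fdiv, Finset.sum_eq_zero, Finset.sum_eq_zero, sub_zero]
        · intro e he
          rw [if_neg (fun h => hninc e he (Or.inl h))]
        · intro e he
          rw [if_neg (fun h => hninc e he (Or.inr h))]
    set G := F.filter (fun e => d e ≠ 0) with hG
    have hGne : G.Nonempty := ⟨ed, Finset.mem_filter.mpr ⟨hedF, hedne⟩⟩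
    have hGF : G ⊆ F := Finset.filter_subset _ _
    have hfloor : ∀ e ∈ F, ((⌊x e⌋ : ℤ) : ℝ) < x e := by
      intro e he
      rcases lt_or_eq_of_le (Int.floor_le (x e)) with h | h
      · exact h
      · exact absurd ⟨⌊x e⌋, h.symm⟩ (hFfrac e he)
    have hceil : ∀ e ∈ F, x e < ((⌈x e⌉ : ℤ) : ℝ) := by
      intro e he
      rcases lt_or_eq_of_le (Int.le_ceil (x e)) with h | h
      · exact h
      · exact absurd ⟨⌈x e⌉, h⟩ (hFfrac e he)
    set te : Z × Z → ℝ := fun e =>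
      if 0 < d e then (((⌈x e⌉ : ℤ) : ℝ) - x e) / d e
      else (x e - ((⌊x e⌋ : ℤ) : ℝ)) / (-(d e)) with hte
    have htepos : ∀ e ∈ G, 0 < te e := by
      intro e heG
      obtain ⟨heF, hdne⟩ := Finset.mem_filter.mp heG
      simp only [hte]
      by_cases hpos : 0 < d e
      · rw [if_pos hpos]
        exact div_pos (by linarith [hceil e heF]) hpos
      · rw [if_neg hpos]
        have hneg : d e < 0 := lt_of_le_of_ne (not_lt.mp hpos) hdne
        exact div_pos (by linarith [hfloor e heF]) (by linarith)
    set t := G.inf' hGne te with ht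
    obtain ⟨em, hemG, htm⟩ := Finset.exists_mem_eq_inf' hGne te
    have htpos : 0 < t := by
      rw [ht, Finset.lt_inf'_iff]
      exact htepos
    have htle : ∀ e ∈ G, t ≤ te e := fun e he => Finset.inf'_le te he
    set x' : Z × Z → ℝ := fun e => x e + t * d e with hx'
    have hxe' : ∀ e, e ∉ G → x' e = x e := by
      intro e he
      have hd0 : d e = 0 := by
        by_contra h
        exact he (Finset.mem_filter.mpr ⟨hdsupp e h, h⟩)
      rw [hx']
      simp [hd0]
    have hbounds' : ∀ e ∈ G, ((⌊x e⌋ : ℤ) : ℝ) ≤ x' e ∧ x' e ≤ ((⌈x e⌉ : ℤ) : ℝ) := by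
      intro e heG
      obtain ⟨heF, hdne⟩ := Finset.mem_filter.mp heG
      have hle := htle e heG
      simp only [hte] at hle
      simp only [hx']
      by_cases hpos : 0 < d e
      · rw [if_pos hpos] at hle
        have h1 : t * d e ≤ ((⌈x e⌉ : ℤ) : ℝ) - x e := (le_div_iff₀ hpos).mp hle
        have h2 : 0 ≤ t * d e := le_of_lt (mul_pos htpos hpos)
        constructor
        · have := Int.floor_le (x e)
          linarith
        · linarith
      · rw [if_neg hpos] at hle
        have hneg : d e < 0 := lt_of_le_of_ne (not_lt.mp hpos) hdne
        have h1 : t * (-(d e)) ≤ x e - ((⌊x e⌋ : ℤ) : ℝ) := (le_div_iff₀ (by linarith)).mp hle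
        have h2 : t * d e ≤ 0 := le_of_lt (mul_neg_of_pos_of_neg htpos hneg)
        constructor
        · nlinarith
        · have := Int.le_ceil (x e)
          linarith
    have hbd' : ∀ e, |x' e| ≤ (M' : ℝ) := by
      intro e
      by_cases heG : e ∈ G
      · obtain ⟨hlo, hhi⟩ := hbounds' e heG
        obtain ⟨ha1, ha2⟩ := abs_le.mp (hbd e)
        have hfl : (-M' : ℤ) ≤ ⌊x e⌋ := Int.le_floor.mpr (by push_cast; linarith)
        have hcl : ⌈x e⌉ ≤ M' := Int.ceil_le.mpr (by push_cast; linarith)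
        have hfl' : ((-M' : ℤ) : ℝ) ≤ ((⌊x e⌋ : ℤ) : ℝ) := by exact_mod_cast hfl
        have hcl' : ((⌈x e⌉ : ℤ) : ℝ) ≤ ((M' : ℤ) : ℝ) := by exact_mod_cast hcl
        rw [abs_le]
        constructor
        · push_cast at hfl' ⊢
          linarith
        · push_cast at hcl' ⊢
          linarith
      · rw [hxe' e heG]
        exact hbd e
    have hsupp' : ∀ e, x' e ≠ 0 → e ∈ E := by
      intro e h
      by_cases heG : e ∈ G
      · exact hFsub (hGF heG)
      · rw [hxe' e heG] at h
        exact hsupp e h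
    have hdiv' : ∀ z ∈ S, fdiv E x' z = (c z : ℝ) := by
      intro z hz
      rw [hx', fdiv_add_mul E x d t z, hdivd z hz, hdiv z hz]
      ring
    have hmint : IsIntR (x' em) := by
      obtain ⟨hemF, hemd⟩ := Finset.mem_filter.mp hemG
      simp only [hx']
      rw [ht, htm]
      simp only [hte]
      by_cases hpos : 0 < d em
      · rw [if_pos hpos]
        refine ⟨⌈x em⌉, ?_⟩
        rw [div_mul_cancel₀ _ (ne_of_gt hpos)]
        ring
      · rw [if_neg hpos]
        have hneg : d em < 0 := lt_of_le_of_ne (not_lt.mp hpos) hemd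
        refine ⟨⌊x em⌋, ?_⟩
        rw [div_neg, neg_mul, div_mul_cancel₀ _ hemd]
        ring
    have hnewcard : (E.filter (fun e => ¬ IsIntR (x' e))).card ≤ n := by
      have hsub : E.filter (fun e => ¬ IsIntR (x' e)) ⊆ F.erase em := by
        intro e he
        obtain ⟨heE, hfrac'⟩ := Finset.mem_filter.mp he
        have heF : e ∈ F := by
          by_contra hne
          have heG : e ∉ G := fun h => hne (hGF h)
          have hint : IsIntR (x e) := by
            by_contra h
            exact hne (Finset.mem_filter.mpr ⟨heE, h⟩)
          rw [hxe' e heG] at hfrac'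
          exact hfrac' hint
        refine Finset.mem_erase.mpr ⟨?_, heF⟩
        intro heq
        rw [heq] at hfrac'
        exact hfrac' hmint
      have h1 : (E.filter (fun e => ¬ IsIntR (x' e))).card ≤ (F.erase em).card :=
        Finset.card_le_card hsub
      rw [Finset.card_erase_of_mem (hGF hemG)] at h1
      have h2 : F.card ≤ n + 1 := hcard
      omega
    exact ih x' hnewcard hsupp' hbd' hdiv'

end BW12

/-- If a uniformly bounded integer 0-cycle bounds a uniformly finite 1-chain with
real coefficients, it bounds one with integer coefficients: the map
`H₀^{uf}(Z; ℤ) → H₀^{uf}(Z; ℝ)` is injective. -/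
theorem stmt12 {Z : Type*} [MetricSpace Z]
    (hud : UniformlyDiscrete Z) (hbg : BoundedGeometry Z)
    (c : Z → ℤ) (hc : ∃ K : ℤ, ∀ z, |c z| ≤ K)
    (hreal : UFBoundsZero (fun z => (c z : ℝ))) :
    UFBoundsZero c := by
  classical
  obtain ⟨b, ⟨⟨M, hM⟩, ⟨l, hl⟩, hfin⟩, hbnd⟩ := hreal
  rcases isEmpty_or_nonempty Z with hZ | hZ
  · refine ⟨fun _ _ => 0, ⟨⟨0, fun z w => by simp⟩, ⟨0, fun z w h0 => absurd rfl h0⟩,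
      fun z => by simp⟩, fun z => (hZ.false z).elim⟩
  obtain ⟨z0⟩ := hZ
  have hM0 : (0:ℝ) ≤ M := le_trans (norm_nonneg _) (hM z0 z0)
  set M' : ℤ := ⌈M⌉ with hM'
  have hM'0 : (0:ℤ) ≤ M' := Int.ceil_nonneg hM0
  have hMM' : M ≤ (M' : ℝ) := Int.le_ceil M
  set Es : Set (Z × Z) := {p | b p.1 p.2 ≠ 0 ∧ p.1 ≠ p.2} with hEs
  set T : Z → Finset Z := fun z => ((hfin z).toFinset).erase z with hT
  have hzT : ∀ z, z ∉ T z := fun z => Finset.notMem_erase _ _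
  have hTmem : ∀ z w, w ≠ z → (b z w ≠ 0 ∨ b w z ≠ 0) → w ∈ T z := by
    intro z w hw hbw
    refine Finset.mem_erase.mpr ⟨hw, ?_⟩
    rw [Set.Finite.mem_toFinset]
    exact hbw
  have hcz : ∀ z, (c z : ℝ) = ∑ w ∈ T z, (b w z - b z w) := by
    intro z
    rw [show ((c z : ℝ)) = ufBoundaryAt b z from hbnd z]
    exact BW12.ufBoundaryAt_eq_sum b z (T z) (hzT z) (fun w hw hbw => hTmem z w hw hbw)
  -- the compact space of candidate integral chains
  set K : Set ((Z × Z) → ℤ) :=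
    Set.univ.pi (fun p => if p ∈ Es then Set.Icc (-M') M' else {0}) with hK
  have hKcompact : IsCompact K := by
    apply isCompact_univ_pi
    intro p
    by_cases hp : p ∈ Es
    · rw [if_pos hp]
      exact (Set.finite_Icc _ _).isCompact
    · rw [if_neg hp]
      exact isCompact_singleton
  set C : Z → Set ((Z × Z) → ℤ) :=
    fun z => {y | ∑ w ∈ T z, (y (w, z) - y (z, w)) = c z} with hC
  have hCclosed : ∀ z, IsClosed (C z) := by
    intro z
    have hcont : Continuous (fun y : (Z × Z) → ℤ => ∑ w ∈ T z, (y (w, z) - y (z, w))) :=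
      continuous_finset_sum _
        (fun w _ => ((continuous_apply ((w, z) : Z × Z)).sub (continuous_apply ((z, w) : Z × Z))))
    exact IsClosed.preimage hcont isClosed_singleton
  -- finite intersection property, via the finite rounding lemma
  have hfip : ∀ u : Finset Z, (K ∩ ⋂ z ∈ u, C z).Nonempty := by
    intro u
    have hEfin : {p : Z × Z | p ∈ Es ∧ (p.1 ∈ u ∨ p.2 ∈ u)}.Finite := by
      apply Set.Finite.subset (Set.Finite.biUnion u.finite_toSet
        (fun z _ => ((hfin z).image (fun w => (z, w))).union ((hfin z).image (fun w => (w, z)))))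
      rintro ⟨p1, p2⟩ ⟨⟨hb0, hne⟩, hu⟩
      rcases hu with h1 | h2
      · exact Set.mem_biUnion h1 (Or.inl ⟨p2, Or.inl hb0, rfl⟩)
      · exact Set.mem_biUnion h2 (Or.inr ⟨p1, Or.inr hb0, rfl⟩)
    set Eu : Finset (Z × Z) := hEfin.toFinset with hEu
    have hEumem : ∀ p : Z × Z, p ∈ Eu ↔ (p ∈ Es ∧ (p.1 ∈ u ∨ p.2 ∈ u)) := by
      intro p
      rw [hEu, Set.Finite.mem_toFinset]
      exact Iff.rfl
    set x : Z × Z → ℝ := fun p => if p ∈ Eu then b p.1 p.2 else 0 with hx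
    have hloopEu : ∀ e ∈ Eu, e.1 ≠ e.2 := fun e he => ((hEumem e).mp he).1.2
    have hsuppx : ∀ e, x e ≠ 0 → e ∈ Eu := by
      intro e he
      by_contra h
      rw [hx] at he
      simp only [if_neg h] at he
      exact he rfl
    have hbdx : ∀ e, |x e| ≤ (M' : ℝ) := by
      intro e
      rw [hx]
      by_cases h : e ∈ Eu
      · simp only [if_pos h]
        calc |b e.1 e.2| = ‖b e.1 e.2‖ := (Real.norm_eq_abs _).symm
          _ ≤ M := hM e.1 e.2
          _ ≤ (M' : ℝ) := hMM'
      · simp only [if_neg h]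
        rw [abs_zero]
        exact_mod_cast hM'0
    -- membership lemmas relating Eu and the neighbour sets
    have hfwdEu : ∀ z ∈ u, ∀ e ∈ Eu, e.1 ≠ e.2 → (e.2 = z → e.1 ∈ T z) ∧ (e.1 = z → e.2 ∈ T z) := by
      intro z hzu e heEu hne
      have hbne : b e.1 e.2 ≠ 0 := ((hEumem e).mp heEu).1.1
      constructor
      · intro h2
        refine hTmem z e.1 (by rw [← h2]; exact hne) ?_
        rw [h2] at hbne
        exact Or.inr hbne
      · intro h1
        refine hTmem z e.2 (by rw [← h1]; exact fun hh => hne hh.symm) ?_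
        rw [h1] at hbne
        exact Or.inl hbne
    have hdivx : ∀ z ∈ u, BW12.fdiv Eu x z = (c z : ℝ) := by
      intro z hzu
      rw [BW12.fdiv_eq_sumT Eu x (T z) z (hzT z)
        (fun e heEu _ hne => hfwdEu z hzu e heEu hne)
        (fun w hw => ⟨fun h => hsuppx _ h, fun h => hsuppx _ h⟩)]
      rw [hcz z]
      refine Finset.sum_congr rfl fun w hw => ?_
      have hwz : w ≠ z := fun h => (hzT z) (h ▸ hw)
      have hx1 : x (w, z) = b w z := by
        rw [hx]
        by_cases h : ((w, z) : Z × Z) ∈ Eu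
        · simp only [if_pos h]
        · simp only [if_neg h]
          by_contra hbne
          exact h ((hEumem (w, z)).mpr ⟨⟨fun hh => hbne hh.symm, hwz⟩, Or.inr hzu⟩)
      have hx2 : x (z, w) = b z w := by
        rw [hx]
        by_cases h : ((z, w) : Z × Z) ∈ Eu
        · simp only [if_pos h]
        · simp only [if_neg h]
          by_contra hbne
          exact h ((hEumem (z, w)).mpr ⟨⟨fun hh => hbne hh.symm, fun hh => hwz hh.symm⟩, Or.inl hzu⟩)
      rw [hx1, hx2]
    obtain ⟨y, hy1, hy2, hy3⟩ := BW12.round_flow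
      ((Eu.filter (fun e => ¬ BW12.IsIntR (x e))).card) hloopEu x le_rfl hsuppx hbdx hdivx
    refine ⟨y, ?_, ?_⟩
    · rw [hK, Set.mem_univ_pi]
      intro p
      by_cases hp : p ∈ Es
      · rw [if_pos hp]
        exact Set.mem_Icc.mpr (abs_le.mp (hy2 p))
      · rw [if_neg hp]
        have : y p = 0 := by
          by_contra h
          exact hp ((hEumem p).mp (hy1 p h)).1
        simp [this]
    · rw [Set.mem_iInter₂]
      intro z hzu
      rw [hC]
      show ∑ w ∈ T z, (y (w, z) - y (z, w)) = c z
      have hZfdiv : BW12.fdiv Eu y z = ∑ w ∈ T z, (y (w, z) - y (z, w)) :=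
        BW12.fdiv_eq_sumT Eu y (T z) z (hzT z)
          (fun e heEu _ hne => hfwdEu z hzu e heEu hne)
          (fun w hw => ⟨fun h => hy1 _ h, fun h => hy1 _ h⟩)
      rw [← hZfdiv]
      have hcast : ((BW12.fdiv Eu y z : ℤ) : ℝ) = ((c z : ℤ) : ℝ) := by
        rw [BW12.fdiv_cast]
        exact hy3 z hzu
      exact_mod_cast hcast
  obtain ⟨y, hyK, hyC⟩ := hKcompact.inter_iInter_nonempty C hCclosed hfip
  have hyKm := Set.mem_univ_pi.mp hyK
  have hy0 : ∀ p, p ∉ Es → y p = 0 := by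
    intro p hp
    have := hyKm p
    rw [if_neg hp] at this
    exact this
  have hyabs : ∀ p, |y p| ≤ M' := by
    intro p
    by_cases hp : p ∈ Es
    · have := hyKm p
      rw [if_pos hp] at this
      exact abs_le.mpr (Set.mem_Icc.mp this)
    · rw [hy0 p hp]
      simpa using hM'0
  have hyEs : ∀ p, y p ≠ 0 → p ∈ Es := by
    intro p hp
    by_contra h
    exact hp (hy0 p h)
  refine ⟨fun z w => y (z, w), ⟨⟨(M' : ℝ), ?_⟩, ⟨l, ?_⟩, ?_⟩, ?_⟩
  · intro z w
    rw [Int.norm_eq_abs]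
    exact_mod_cast hyabs (z, w)
  · intro z w h0
    exact hl z w (hyEs (z, w) h0).1
  · intro z
    apply (hfin z).subset
    intro w hw
    rcases hw with h | h
    · exact Or.inl (hyEs (z, w) h).1
    · exact Or.inr (hyEs (w, z) h).1
  · intro z
    rw [BW12.ufBoundaryAt_eq_sum (fun z w => y (z, w)) z (T z) (hzT z) ?hTT]
    case hTT =>
      intro w hwz hbw
      apply hTmem z w hwz
      rcases hbw with h | h
      · exact Or.inl (hyEs (z, w) h).1
      · exact Or.inr (hyEs (w, z) h).1
    exact (Set.mem_iInter.mp hyC z).symm
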